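/- arXiv:1512.05033 — 2 statements merged into one kernel-verified Lean document; each statement's English description precedes it below -/
import Mathlib

section
/- Assume in addition ∑_{j≥2} (j−1) b_j < ∞ and μ_1 = ∑_{j≥1} j h_j < ∞, and write B_c′(1) = ∑_{j≥2}(j−1)b_j − c b_0. Then the mean equilibrium queue size is finite and equals E(N) = ∑_{j≥1} j π_j = π_0·[(H(u(β)) − h − μ_1)·(−β) − (H(u(β)) − h)·(B_c′(1) − β)]/β² + (1/β²)·∑_{k=1}^{c−1} π_k (c−k) b_0·[β + u(β)^{k−1}(1 − u(β))·B_c′(1)], where u(β) is the unique root of B_c(s) = β s in [0,1]. -/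
set_option maxHeartbeats 2000000

open Set Filter Topology

/-- The generating function `B_i(s) = ∑_{j≥0} b_j s^j + (i-1) b_0 (1-s)`. -/
noncomputable def Bi (b : ℕ → ℝ) (i : ℕ) (s : ℝ) : ℝ :=
  (∑' j : ℕ, b j * s ^ j) + ((i : ℝ) - 1) * b 0 * (1 - s)

/-- The generating function `H(s) = ∑_{j≥1} h_j s^j`. -/
noncomputable def Hgen (hh : ℕ → ℝ) (s : ℝ) : ℝ :=
  ∑' j : ℕ, hh (j + 1) * s ^ (j + 1)

/-- Convolution term. -/
noncomputable def Cv (b p : ℕ → ℝ) (m : ℕ) : ℝ :=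
  ∑ k ∈ Finset.Icc 1 (m - 1), b (m - k + 1) * p k

lemma sum_Icc_one (f : ℕ → ℝ) (m : ℕ) :
    ∑ k ∈ Finset.Icc 1 m, f k = ∑ i ∈ Finset.range m, f (i + 1) := by
  rw [← Finset.Ico_add_one_right_eq_Icc, Finset.sum_Ico_eq_sum_range]
  simp [add_comm]

lemma Cv_one (b p : ℕ → ℝ) : Cv b p 1 = 0 := by simp [Cv]

lemma Cv_succ (b p : ℕ → ℝ) (n : ℕ) :
    Cv b p (n + 2) = ∑ k ∈ Finset.range (n + 1), p (k + 1) * b (n - k + 2) := by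
  have h1 : n + 2 - 1 = n + 1 := rfl
  rw [Cv, h1, sum_Icc_one]
  refine Finset.sum_congr rfl fun i hi => ?_
  have hi' : i ≤ n := by simpa [Nat.lt_succ_iff] using Finset.mem_range.mp hi
  have h2 : n + 2 - (i + 1) + 1 = n - i + 2 := by omega
  rw [h2, mul_comm]

lemma Cv_nonneg (b p : ℕ → ℝ) (hb : ∀ j, j ≠ 1 → 0 ≤ b j) (hp : ∀ n, 0 ≤ p n) (m : ℕ) :
    0 ≤ Cv b p m := by
  refine Finset.sum_nonneg fun k hk => ?_
  obtain ⟨hk1, hk2⟩ := Finset.mem_Icc.mp hk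
  exact mul_nonneg (hb _ (by omega)) (hp k)

lemma summable_bdd_mul {f g : ℕ → ℝ} (K : ℝ) (hg : Summable g) (hgnn : ∀ n, 0 ≤ g n)
    (hbd : ∀ n, |f n| ≤ K) : Summable (fun n => f n * g n) := by
  refine Summable.of_norm_bounded (hg.mul_left K) fun n => ?_
  rw [Real.norm_eq_abs, abs_mul, abs_of_nonneg (hgnn n)]
  exact mul_le_mul_of_nonneg_right (hbd n) (hgnn n)

lemma tsum_four_split {A B C D : ℕ → ℝ} (hA : Summable A) (hB : Summable B) (hC : Summable C)
    (h0 : ∀ n, A n + B n + C n + D n = 0) :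
    Summable D ∧ (∑' n, A n) + (∑' n, B n) + (∑' n, C n) + (∑' n, D n) = 0 := by
  have hD : Summable D := by
    have : D = fun n => -(A n + B n + C n) := by
      funext n; have := h0 n; linarith
    rw [this]
    exact ((hA.add hB).add hC).neg
  refine ⟨hD, ?_⟩
  have : (∑' n, A n) + (∑' n, B n) + (∑' n, C n) + (∑' n, D n)
      = ∑' n, (A n + B n + C n + D n) := by
    rw [Summable.tsum_add ((hA.add hB).add hC) hD, Summable.tsum_add (hA.add hB) hC, Summable.tsum_add hA hB]
  rw [this]
  simp [h0]

theorem stmt17 (c : ℕ) (hc : 1 ≤ c) (b : ℕ → ℝ)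
    (hbnn : ∀ j : ℕ, j ≠ 1 → 0 ≤ b j) (hb0 : 0 < b 0)
    (hbsum : Summable b) (hbzero : (∑' j : ℕ, b j) = 0)
    (hb2 : 0 < ∑' j : ℕ, b (j + 2))
    (hh : ℕ → ℝ) (hhnn : ∀ j : ℕ, 0 ≤ hh (j + 1))
    (hhsum : Summable (fun j : ℕ => hh (j + 1)))
    (hhpos : 0 < ∑' j : ℕ, hh (j + 1))
    (β : ℝ) (hβ : 0 < β)
    (π : ℕ → ℝ) (hπnn : ∀ n : ℕ, 0 ≤ π n) (hπsum : Summable π)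
    (hπ1 : (∑' n : ℕ, π n) = 1)
    (heq0 : -((∑' j : ℕ, hh (j + 1)) + β) * π 0 + b 0 * π 1 + β = 0)
    (heqmid : ∀ n : ℕ, 1 ≤ n → n ≤ c - 1 →
      hh n * π 0 + (∑ k ∈ Finset.Icc 1 (n - 1), b (n - k + 1) * π k) +
        (b 1 - ((n : ℝ) - 1) * b 0 - β) * π n + ((n : ℝ) + 1) * b 0 * π (n + 1) = 0)
    (heqtail : ∀ n : ℕ, c ≤ n →
      hh n * π 0 + (∑ k ∈ Finset.Icc 1 (n - 1), b (n - k + 1) * π k) +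
        (b 1 - ((c : ℝ) - 1) * b 0 - β) * π n + (c : ℝ) * b 0 * π (n + 1) = 0)
    (uβ : ℝ) (huβ : uβ ∈ Set.Ioo (0 : ℝ) 1) (huβroot : Bi b c uβ = β * uβ)
    (hconv : Summable (fun j : ℕ => ((j : ℝ) + 1) * b (j + 2)))
    (hμ : Summable (fun j : ℕ => ((j : ℝ) + 1) * hh (j + 1))) :
    Summable (fun j : ℕ => (j : ℝ) * π j) ∧
    (∑' j : ℕ, (j : ℝ) * π j) =
      π 0 * ((Hgen hh uβ - (∑' j : ℕ, hh (j + 1)) -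
            (∑' j : ℕ, ((j : ℝ) + 1) * hh (j + 1))) * (-β) -
          (Hgen hh uβ - (∑' j : ℕ, hh (j + 1))) *
            (((∑' j : ℕ, ((j : ℝ) + 1) * b (j + 2)) - (c : ℝ) * b 0) - β)) / β ^ 2 +
        (1 / β ^ 2) *
          ∑ k ∈ Finset.Icc 1 (c - 1),
            π k * ((c : ℝ) - (k : ℝ)) * b 0 *
              (β + uβ ^ (k - 1) * (1 - uβ) *
                ((∑' j : ℕ, ((j : ℝ) + 1) * b (j + 2)) - (c : ℝ) * b 0)) := by
  obtain ⟨hu0, hu1⟩ := huβ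
  have hu0' : (0:ℝ) ≤ uβ := le_of_lt hu0
  have sπ1 : Summable (fun n => π (n + 1)) := (summable_nat_add_iff 1).mpr hπsum
  have sπ2 : Summable (fun n => π (n + 2)) := (summable_nat_add_iff 2).mpr hπsum
  have sb1 : Summable (fun n => b (n + 1)) := (summable_nat_add_iff 1).mpr hbsum
  have sb2 : Summable (fun n => b (n + 2)) := (summable_nat_add_iff 2).mpr hbsum
  have hbnn2 : ∀ j : ℕ, 0 ≤ b (j + 2) := fun j => hbnn _ (by omega)
  have hπ0le : π 0 ≤ 1 := hπ1 ▸ Summable.le_tsum hπsum 0 (fun j _ => hπnn j)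
  have htail : (∑' n : ℕ, π (n + 1)) = 1 - π 0 := by
    have := Summable.tsum_eq_zero_add hπsum
    rw [hπ1] at this; linarith
  have hb1 : b 1 = -(b 0 + ∑' j : ℕ, b (j + 2)) := by
    have h1 := Summable.tsum_eq_zero_add hbsum
    have h2 : (∑' n : ℕ, b (n + 1)) = b 1 + ∑' n : ℕ, b (n + 2) := Summable.tsum_eq_zero_add sb1
    rw [hbzero, h2] at h1; linarith
  -- unified balance equation
  have hEq : ∀ n : ℕ, hh (n + 1) * π 0 + Cv b π (n + 1) +
      (b 1 - (((min (n + 1) c : ℕ) : ℝ) - 1) * b 0 - β) * π (n + 1) +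
      ((min (n + 2) c : ℕ) : ℝ) * b 0 * π (n + 2) = 0 := by
    intro n
    rcases le_or_gt (n + 2) c with hle | hlt
    · have hm1 : min (n + 1) c = n + 1 := by omega
      have hm2 : min (n + 2) c = n + 2 := by omega
      have := heqmid (n + 1) (by omega) (by omega)
      rw [hm1, hm2, Cv]
      push_cast
      push_cast at this
      linarith
    · have hm1 : min (n + 1) c = c := by omega
      have hm2 : min (n + 2) c = c := by omega
      have := heqtail (n + 1) (by omega)
      rw [hm1, hm2, Cv]
      linarith

  -- Step 1: summability of (n * π n)
  have Nbd : ∀ (N n m : ℕ), |((min (n + m) N : ℕ) : ℝ)| ≤ N := by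
    intro N n m
    rw [abs_of_nonneg (by positivity)]
    exact_mod_cast min_le_right _ _
  have hJnn : (0:ℝ) ≤ ∑' j : ℕ, ((j:ℝ)+1) * b (j+2) :=
    tsum_nonneg fun j => mul_nonneg (by positivity) (hbnn2 j)
  have hμnn : (0:ℝ) ≤ ∑' j : ℕ, ((j:ℝ)+1) * hh (j+1) :=
    tsum_nonneg fun j => mul_nonneg (by positivity) (hhnn j)
  have hB2nn : (0:ℝ) ≤ ∑' j : ℕ, b (j+2) := tsum_nonneg hbnn2
  have hCvsum2 : Summable (fun n => Cv b π (n + 2)) := by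
    have hprod : Summable (fun p : ℕ × ℕ => π (p.1 + 1) * b (p.2 + 2)) :=
      sπ1.mul_of_nonneg sb2 (fun n => hπnn _) hbnn2
    have hrange : Summable (fun n => ∑ k ∈ Finset.range (n + 1), π (k + 1) * b (n - k + 2)) :=
      summable_sum_mul_range_of_summable_mul (f := fun k => π (k + 1)) (g := fun j => b (j + 2)) hprod
    exact hrange.congr (fun n => (Cv_succ b π n).symm)
  have hCvsum : Summable (fun n => Cv b π (n + 1)) := by
    have h3 : Summable (fun n => Cv b π (n + 1 + 1)) := hCvsum2.congr (fun n => by norm_num)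
    exact (summable_nat_add_iff (f := fun n => Cv b π (n + 1)) 1).mp h3
  have key : ∀ N : ℕ, (∑' n : ℕ, ((min (n + 1) N : ℕ) : ℝ) * π (n + 1)) ≤
      ((∑' j : ℕ, ((j:ℝ)+1) * hh (j+1)) + (∑' j : ℕ, ((j:ℝ)+1) * b (j+2))) / β := by
    intro N
    -- summability of the four pieces
    have sWπ : Summable (fun n => ((min (n + 1) N : ℕ) : ℝ) * π (n + 1)) :=
      summable_bdd_mul (N : ℝ) sπ1 (fun n => hπnn _) (fun n => Nbd N n 1)
    have sA : Summable (fun n => (((min (n + 1) N : ℕ) : ℝ) * π 0) * hh (n + 1)) := by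
      refine summable_bdd_mul (N : ℝ) hhsum hhnn (fun n => ?_)
      rw [abs_mul]
      calc |((min (n + 1) N : ℕ) : ℝ)| * |π 0| ≤ (N:ℝ) * 1 := by
            refine mul_le_mul (Nbd N n 1) ?_ (abs_nonneg _) (by positivity)
            rw [abs_of_nonneg (hπnn 0)]; exact hπ0le
        _ = N := mul_one _
    have sB : Summable (fun n => ((min (n + 1) N : ℕ) : ℝ) * Cv b π (n + 1)) :=
      summable_bdd_mul (N : ℝ) hCvsum (fun n => Cv_nonneg b π hbnn hπnn _) (fun n => Nbd N n 1)
    have sC : Summable (fun n => (((min (n + 1) N : ℕ) : ℝ) *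
        (b 1 - (((min (n + 1) c : ℕ) : ℝ) - 1) * b 0 - β)) * π (n + 1)) := by
      refine summable_bdd_mul ((N : ℝ) * (|b 1| + c * b 0 + β)) sπ1 (fun n => hπnn _)
        (fun n => ?_)
      rw [abs_mul]
      have h1 : (1:ℝ) ≤ ((min (n + 1) c : ℕ) : ℝ) := by exact_mod_cast (by omega : 1 ≤ min (n+1) c)
      have h2 : ((min (n + 1) c : ℕ) : ℝ) ≤ c := by exact_mod_cast min_le_right (n+1) c
      have hco : |b 1 - (((min (n + 1) c : ℕ) : ℝ) - 1) * b 0 - β| ≤ |b 1| + c * b 0 + β := by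
        rw [abs_le]
        constructor <;> nlinarith [neg_abs_le (b 1), le_abs_self (b 1), hb0, hβ]
      exact mul_le_mul (Nbd N n 1) hco (abs_nonneg _) (by positivity)
    have sQ : Summable (fun n => (((min (n + 1) N : ℕ) : ℝ) * ((min (n + 1) c : ℕ) : ℝ)) * π (n + 1)) := by
      refine summable_bdd_mul ((N : ℝ) * c) sπ1 (fun n => hπnn _) (fun n => ?_)
      rw [abs_mul]
      refine mul_le_mul (Nbd N n 1) ?_ (abs_nonneg _) (by positivity)
      rw [abs_of_nonneg (by positivity)]
      exact_mod_cast min_le_right (n+1) c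
    have sD : Summable (fun n => (((min (n + 1) N : ℕ) : ℝ) * (((min (n + 2) c : ℕ) : ℝ) * b 0)) * π (n + 2)) := by
      refine summable_bdd_mul ((N : ℝ) * (c * b 0)) sπ2 (fun n => hπnn _) (fun n => ?_)
      rw [abs_mul]
      refine mul_le_mul (Nbd N n 1) ?_ (abs_nonneg _) (by positivity)
      rw [abs_of_nonneg (by positivity)]
      have : ((min (n + 2) c : ℕ) : ℝ) ≤ c := by exact_mod_cast min_le_right (n+2) c
      nlinarith [hb0]
    have h0 : ∀ n : ℕ, (((min (n + 1) N : ℕ) : ℝ) * π 0) * hh (n + 1) +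
        ((min (n + 1) N : ℕ) : ℝ) * Cv b π (n + 1) +
        (((min (n + 1) N : ℕ) : ℝ) * (b 1 - (((min (n + 1) c : ℕ) : ℝ) - 1) * b 0 - β)) * π (n + 1) +
        (((min (n + 1) N : ℕ) : ℝ) * (((min (n + 2) c : ℕ) : ℝ) * b 0)) * π (n + 2) = 0 := by
      intro n
      have h := hEq n
      linear_combination ((min (n + 1) N : ℕ) : ℝ) * h
    obtain ⟨sD', heqsum⟩ := tsum_four_split sA sB sC h0
    -- bound for the A-term
    have hA_le : (∑' n : ℕ, (((min (n + 1) N : ℕ) : ℝ) * π 0) * hh (n + 1)) ≤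
        ∑' j : ℕ, ((j:ℝ)+1) * hh (j+1) := by
      refine Summable.tsum_le_tsum (fun n => ?_) sA hμ
      have h1 : ((min (n + 1) N : ℕ) : ℝ) ≤ (n:ℝ) + 1 := by
        exact_mod_cast (min_le_left (n+1) N)
      have hw : ((min (n + 1) N : ℕ) : ℝ) * π 0 ≤ ((n:ℝ) + 1) * 1 := by
        refine mul_le_mul h1 hπ0le (hπnn 0) (by positivity)
      have := mul_le_mul_of_nonneg_right hw (hhnn n)
      calc (((min (n + 1) N : ℕ) : ℝ) * π 0) * hh (n + 1)
          ≤ (((n:ℝ) + 1) * 1) * hh (n + 1) := this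
        _ = ((n:ℝ) + 1) * hh (n + 1) := by ring
    -- bound for the B-term
    have hB_le : (∑' n : ℕ, ((min (n + 1) N : ℕ) : ℝ) * Cv b π (n + 1)) ≤
        (∑' n : ℕ, ((min (n + 1) N : ℕ) : ℝ) * π (n + 1)) * (∑' j : ℕ, b (j+2)) +
          (∑' j : ℕ, ((j:ℝ)+1) * b (j+2)) := by
      have prod1 : Summable (fun p : ℕ × ℕ =>
          (((min (p.1 + 1) N : ℕ) : ℝ) * π (p.1 + 1)) * b (p.2 + 2)) :=
        sWπ.mul_of_nonneg sb2 (fun n => mul_nonneg (by positivity) (hπnn _)) hbnn2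
      have prod2 : Summable (fun p : ℕ × ℕ =>
          π (p.1 + 1) * (((p.2 : ℝ) + 1) * b (p.2 + 2))) :=
        sπ1.mul_of_nonneg hconv (fun n => hπnn _)
          (fun n => mul_nonneg (by positivity) (hbnn2 n))
      have sF1 : Summable (fun n => ∑ k ∈ Finset.range (n + 1),
          (((min (k + 1) N : ℕ) : ℝ) * π (k + 1)) * b (n - k + 2)) :=
        summable_sum_mul_range_of_summable_mul
          (f := fun k => ((min (k + 1) N : ℕ) : ℝ) * π (k + 1)) (g := fun j => b (j + 2)) prod1
      have sF2 : Summable (fun n => ∑ k ∈ Finset.range (n + 1),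
          π (k + 1) * ((((n - k : ℕ) : ℝ) + 1) * b (n - k + 2))) :=
        summable_sum_mul_range_of_summable_mul
          (f := fun k => π (k + 1)) (g := fun j => ((j : ℝ) + 1) * b (j + 2)) prod2
      have cauchy1 : (∑' n : ℕ, ((min (n + 1) N : ℕ) : ℝ) * π (n + 1)) * (∑' j : ℕ, b (j+2)) =
          ∑' n : ℕ, ∑ k ∈ Finset.range (n + 1),
            (((min (k + 1) N : ℕ) : ℝ) * π (k + 1)) * b (n - k + 2) :=
        Summable.tsum_mul_tsum_eq_tsum_sum_range
          (f := fun k => ((min (k + 1) N : ℕ) : ℝ) * π (k + 1)) (g := fun j => b (j + 2)) sWπ sb2 prod1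
      have cauchy2 : (∑' n : ℕ, π (n + 1)) * (∑' j : ℕ, ((j:ℝ)+1) * b (j+2)) =
          ∑' n : ℕ, ∑ k ∈ Finset.range (n + 1),
            π (k + 1) * ((((n - k : ℕ) : ℝ) + 1) * b (n - k + 2)) :=
        Summable.tsum_mul_tsum_eq_tsum_sum_range
          (f := fun k => π (k + 1)) (g := fun j => ((j : ℝ) + 1) * b (j + 2)) sπ1 hconv prod2
      have sB2 : Summable (fun n => ((min (n + 2) N : ℕ) : ℝ) * Cv b π (n + 2)) :=
        summable_bdd_mul (N : ℝ) hCvsum2 (fun n => Cv_nonneg b π hbnn hπnn _) (fun n => Nbd N n 2)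
      have hBshift : (∑' n : ℕ, ((min (n + 1) N : ℕ) : ℝ) * Cv b π (n + 1)) =
          ∑' n : ℕ, ((min (n + 2) N : ℕ) : ℝ) * Cv b π (n + 2) := by
        rw [Summable.tsum_eq_zero_add sB]
        have e1 : ((min (0 + 1) N : ℕ) : ℝ) * Cv b π (0 + 1) = 0 := by
          rw [show (0 + 1 : ℕ) = 1 from rfl, Cv_one, mul_zero]
        rw [e1, zero_add]
      rw [hBshift]
      have hle2 : (∑' n : ℕ, ((min (n + 2) N : ℕ) : ℝ) * Cv b π (n + 2)) ≤
          ∑' n : ℕ, ((∑ k ∈ Finset.range (n + 1),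
              (((min (k + 1) N : ℕ) : ℝ) * π (k + 1)) * b (n - k + 2)) +
            ∑ k ∈ Finset.range (n + 1),
              π (k + 1) * ((((n - k : ℕ) : ℝ) + 1) * b (n - k + 2))) := by
        refine Summable.tsum_le_tsum (fun n => ?_) sB2 (sF1.add sF2)
        rw [Cv_succ, Finset.mul_sum, ← Finset.sum_add_distrib]
        refine Finset.sum_le_sum (fun k hk => ?_)
        have hk' : k ≤ n := by simpa [Nat.lt_succ_iff] using Finset.mem_range.mp hk
        have hmin : (min (n + 2) N : ℕ) ≤ min (k + 1) N + ((n - k) + 1) := by omega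
        have hminR : ((min (n + 2) N : ℕ) : ℝ) ≤ ((min (k + 1) N : ℕ) : ℝ) + (((n - k : ℕ) : ℝ) + 1) := by
          exact_mod_cast hmin
        have hπb : (0:ℝ) ≤ π (k + 1) * b (n - k + 2) := mul_nonneg (hπnn _) (hbnn2 _)
        nlinarith [hπnn (k+1), hbnn2 (n-k)]
      refine hle2.trans ?_
      rw [Summable.tsum_add sF1 sF2, ← cauchy1, ← cauchy2, htail]
      have : (1 - π 0) * (∑' j : ℕ, ((j:ℝ)+1) * b (j+2)) ≤ ∑' j : ℕ, ((j:ℝ)+1) * b (j+2) := by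
        nlinarith [hπnn 0]
      linarith
    -- value of the C-term
    have hCval : (∑' n : ℕ, (((min (n + 1) N : ℕ) : ℝ) *
          (b 1 - (((min (n + 1) c : ℕ) : ℝ) - 1) * b 0 - β)) * π (n + 1)) =
        -(((∑' j : ℕ, b (j+2)) + β) * (∑' n : ℕ, ((min (n + 1) N : ℕ) : ℝ) * π (n + 1)) +
          b 0 * (∑' n : ℕ, (((min (n + 1) N : ℕ) : ℝ) * ((min (n + 1) c : ℕ) : ℝ)) * π (n + 1))) := by
      have hptw : ∀ n : ℕ, (((min (n + 1) N : ℕ) : ℝ) *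
          (b 1 - (((min (n + 1) c : ℕ) : ℝ) - 1) * b 0 - β)) * π (n + 1) =
          -(((∑' j : ℕ, b (j+2)) + β) * (((min (n + 1) N : ℕ) : ℝ) * π (n + 1)) +
            b 0 * ((((min (n + 1) N : ℕ) : ℝ) * ((min (n + 1) c : ℕ) : ℝ)) * π (n + 1))) := by
        intro n
        linear_combination (((min (n + 1) N : ℕ) : ℝ) * π (n + 1)) * hb1
      rw [tsum_congr hptw, tsum_neg, Summable.tsum_add ((sWπ).mul_left _) ((sQ).mul_left _),
        tsum_mul_left, tsum_mul_left]
    -- value and bound of the D-term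
    have hDval : (∑' n : ℕ, (((min (n + 1) N : ℕ) : ℝ) * (((min (n + 2) c : ℕ) : ℝ) * b 0)) * π (n + 2)) =
        b 0 * (∑' n : ℕ, (((min (n + 1) N : ℕ) : ℝ) * ((min (n + 2) c : ℕ) : ℝ)) * π (n + 2)) := by
      rw [← tsum_mul_left]
      exact tsum_congr (fun n => by ring)
    have sT : Summable (fun n => (((min (n + 1) N : ℕ) : ℝ) * ((min (n + 2) c : ℕ) : ℝ)) * π (n + 2)) := by
      refine summable_bdd_mul ((N : ℝ) * c) sπ2 (fun n => hπnn _) (fun n => ?_)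
      rw [abs_mul]
      refine mul_le_mul (Nbd N n 1) ?_ (abs_nonneg _) (by positivity)
      rw [abs_of_nonneg (by positivity)]
      exact_mod_cast min_le_right (n+2) c
    have hT_le : (∑' n : ℕ, (((min (n + 1) N : ℕ) : ℝ) * ((min (n + 2) c : ℕ) : ℝ)) * π (n + 2)) ≤
        ∑' n : ℕ, (((min (n + 1) N : ℕ) : ℝ) * ((min (n + 1) c : ℕ) : ℝ)) * π (n + 1) := by
      have step1 : (∑' n : ℕ, (((min (n + 1) N : ℕ) : ℝ) * ((min (n + 2) c : ℕ) : ℝ)) * π (n + 2)) ≤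
          ∑' n : ℕ, (((min (n + 2) N : ℕ) : ℝ) * ((min (n + 2) c : ℕ) : ℝ)) * π (n + 2) := by
        refine Summable.tsum_le_tsum (fun n => ?_) sT ((summable_nat_add_iff 1).mpr sQ)
        have h1 : ((min (n + 1) N : ℕ) : ℝ) ≤ ((min (n + 2) N : ℕ) : ℝ) := by
          exact_mod_cast (by omega : min (n + 1) N ≤ min (n + 2) N)
        have h2 : ((min (n + 1) N : ℕ) : ℝ) * ((min (n + 2) c : ℕ) : ℝ) ≤
            ((min (n + 2) N : ℕ) : ℝ) * ((min (n + 2) c : ℕ) : ℝ) :=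
          mul_le_mul_of_nonneg_right h1 (by positivity)
        exact mul_le_mul_of_nonneg_right h2 (hπnn _)
      refine step1.trans ?_
      rw [Summable.tsum_eq_zero_add sQ]
      have : (0:ℝ) ≤ (((min (0 + 1) N : ℕ) : ℝ) * ((min (0 + 1) c : ℕ) : ℝ)) * π (0 + 1) :=
        mul_nonneg (by positivity) (hπnn _)
      linarith
    -- put it together
    rw [hCval, hDval] at heqsum
    rw [le_div_iff₀ hβ]
    nlinarith [hA_le, hB_le, hT_le, hb0, mul_le_mul_of_nonneg_left hT_le (le_of_lt hb0)]
  -- conclude summability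
  have hE : Summable (fun j : ℕ => (j : ℝ) * π j) := by
    refine summable_of_sum_range_le (c := ((∑' j : ℕ, ((j:ℝ)+1) * hh (j+1)) +
        (∑' j : ℕ, ((j:ℝ)+1) * b (j+2))) / β)
      (fun n => mul_nonneg (Nat.cast_nonneg n) (hπnn n)) (fun m => ?_)
    have sg : Summable (fun i => ((min i m : ℕ) : ℝ) * π i) :=
      summable_bdd_mul (m : ℝ) hπsum hπnn (fun n => by
        rw [abs_of_nonneg (by positivity)]; exact_mod_cast min_le_right n m)
    have h1 : ∑ i ∈ Finset.range m, (i : ℝ) * π i = ∑ i ∈ Finset.range m, ((min i m : ℕ) : ℝ) * π i := by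
      refine Finset.sum_congr rfl (fun i hi => ?_)
      have : min i m = i := by
        have := Finset.mem_range.mp hi; omega
      rw [this]
    rw [h1]
    have h2 : ∑ i ∈ Finset.range m, ((min i m : ℕ) : ℝ) * π i ≤ ∑' i : ℕ, ((min i m : ℕ) : ℝ) * π i :=
      Summable.sum_le_tsum _ (fun i _ => mul_nonneg (by positivity) (hπnn i)) sg
    have h3 : (∑' i : ℕ, ((min i m : ℕ) : ℝ) * π i) = ∑' n : ℕ, ((min (n + 1) m : ℕ) : ℝ) * π (n + 1) := by
      rw [Summable.tsum_eq_zero_add sg]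
      simp
    calc ∑ i ∈ Finset.range m, ((min i m : ℕ) : ℝ) * π i ≤ ∑' i : ℕ, ((min i m : ℕ) : ℝ) * π i := h2
      _ = ∑' n : ℕ, ((min (n + 1) m : ℕ) : ℝ) * π (n + 1) := h3
      _ ≤ _ := key m

  -- Step 2: the first moment equation
  have sE1 : Summable (fun n : ℕ => ((n:ℝ) + 1) * π (n + 1)) := by
    have h1 : Summable (fun n => ((n + 1 : ℕ) : ℝ) * π (n + 1)) := (summable_nat_add_iff 1).mpr hE
    exact h1.congr (fun n => by push_cast; ring)
  have sE2 : Summable (fun n : ℕ => ((n:ℝ) + 2) * π (n + 2)) := by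
    have h1 : Summable (fun n => ((n + 2 : ℕ) : ℝ) * π (n + 2)) := (summable_nat_add_iff 2).mpr hE
    exact h1.congr (fun n => by push_cast; ring)
  have hEshift : (∑' j : ℕ, (j : ℝ) * π j) = ∑' n : ℕ, ((n:ℝ) + 1) * π (n + 1) := by
    rw [Summable.tsum_eq_zero_add hE]
    push_cast
    rw [zero_mul, zero_add]
  have sA2 : Summable (fun n : ℕ => (((n:ℝ) + 1) * π 0) * hh (n + 1)) :=
    (hμ.mul_right (π 0)).congr (fun n => by ring)
  have prod1b : Summable (fun p : ℕ × ℕ => (((p.1:ℝ) + 1) * π (p.1 + 1)) * b (p.2 + 2)) :=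
    sE1.mul_of_nonneg sb2 (fun n => mul_nonneg (by positivity) (hπnn _)) hbnn2
  have prod2b : Summable (fun p : ℕ × ℕ => π (p.1 + 1) * (((p.2:ℝ) + 1) * b (p.2 + 2))) :=
    sπ1.mul_of_nonneg hconv (fun n => hπnn _) (fun n => mul_nonneg (by positivity) (hbnn2 n))
  have sG1 : Summable (fun n => ∑ k ∈ Finset.range (n + 1),
      (((k:ℝ) + 1) * π (k + 1)) * b (n - k + 2)) :=
    summable_sum_mul_range_of_summable_mul
      (f := fun k => ((k:ℝ) + 1) * π (k + 1)) (g := fun j => b (j + 2)) prod1b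
  have sG2 : Summable (fun n => ∑ k ∈ Finset.range (n + 1),
      π (k + 1) * ((((n - k : ℕ):ℝ) + 1) * b (n - k + 2))) :=
    summable_sum_mul_range_of_summable_mul
      (f := fun k => π (k + 1)) (g := fun j => ((j:ℝ) + 1) * b (j + 2)) prod2b
  have cauchyB1 : (∑' n : ℕ, ((n:ℝ) + 1) * π (n + 1)) * (∑' j : ℕ, b (j + 2)) =
      ∑' n : ℕ, ∑ k ∈ Finset.range (n + 1), (((k:ℝ) + 1) * π (k + 1)) * b (n - k + 2) :=
    Summable.tsum_mul_tsum_eq_tsum_sum_range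
      (f := fun k => ((k:ℝ) + 1) * π (k + 1)) (g := fun j => b (j + 2)) sE1 sb2 prod1b
  have cauchyB2 : (∑' n : ℕ, π (n + 1)) * (∑' j : ℕ, ((j:ℝ) + 1) * b (j + 2)) =
      ∑' n : ℕ, ∑ k ∈ Finset.range (n + 1),
        π (k + 1) * ((((n - k : ℕ):ℝ) + 1) * b (n - k + 2)) :=
    Summable.tsum_mul_tsum_eq_tsum_sum_range
      (f := fun k => π (k + 1)) (g := fun j => ((j:ℝ) + 1) * b (j + 2)) sπ1 hconv prod2b
  have hterm2 : ∀ n : ℕ, (((n + 1 : ℕ):ℝ) + 1) * Cv b π (n + 1 + 1) =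
      (∑ k ∈ Finset.range (n + 1), (((k:ℝ) + 1) * π (k + 1)) * b (n - k + 2)) +
      ∑ k ∈ Finset.range (n + 1), π (k + 1) * ((((n - k : ℕ):ℝ) + 1) * b (n - k + 2)) := by
    intro n
    rw [show n + 1 + 1 = n + 2 from rfl, Cv_succ, Finset.mul_sum, ← Finset.sum_add_distrib]
    refine Finset.sum_congr rfl (fun k hk => ?_)
    have hk' : k ≤ n := by simpa [Nat.lt_succ_iff] using Finset.mem_range.mp hk
    have hcast : ((n - k : ℕ):ℝ) = (n:ℝ) - (k:ℝ) := by
      rw [Nat.cast_sub hk']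
    rw [hcast]
    push_cast
    ring
  have sB2' : Summable (fun n : ℕ => (((n:ℝ) + 1) * Cv b π (n + 1))) := by
    have h1 : Summable (fun n => (((n + 1 : ℕ):ℝ) + 1) * Cv b π (n + 1 + 1)) := by
      refine ((sG1.add sG2).congr (fun n => ?_))
      rw [hterm2 n]
    have h2 : Summable (fun n : ℕ => (((n:ℝ) + 1) * Cv b π (n + 1)) ) := by
      have h3 := (summable_nat_add_iff (f := fun n : ℕ => ((n:ℝ) + 1) * Cv b π (n + 1)) 1).mp
        (h1.congr (fun n => by push_cast; ring_nf))
      exact h3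
    exact h2
  have hBval : (∑' n : ℕ, ((n:ℝ) + 1) * Cv b π (n + 1)) =
      (∑' n : ℕ, ((n:ℝ) + 1) * π (n + 1)) * (∑' j : ℕ, b (j + 2)) +
        (1 - π 0) * (∑' j : ℕ, ((j:ℝ) + 1) * b (j + 2)) := by
    rw [Summable.tsum_eq_zero_add sB2']
    have e1 : (((0:ℕ):ℝ) + 1) * Cv b π (0 + 1) = 0 := by
      rw [show (0 + 1 : ℕ) = 1 from rfl, Cv_one, mul_zero]
    rw [e1, zero_add, tsum_congr hterm2, Summable.tsum_add sG1 sG2, ← cauchyB1, ← cauchyB2, htail]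
  have sQ2 : Summable (fun n : ℕ => (((n:ℝ) + 1) * ((min (n + 1) c : ℕ):ℝ)) * π (n + 1)) := by
    refine Summable.of_nonneg_of_le (fun n => ?_) (fun n => ?_) (sE1.mul_left (c:ℝ))
    · exact mul_nonneg (mul_nonneg (by positivity) (by positivity)) (hπnn _)
    · have h1 : ((min (n + 1) c : ℕ):ℝ) ≤ (c:ℝ) := by exact_mod_cast min_le_right (n+1) c
      have h2 : (((n:ℝ) + 1) * ((min (n + 1) c : ℕ):ℝ)) * π (n + 1) ≤
          (((n:ℝ) + 1) * (c:ℝ)) * π (n + 1) := by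
        refine mul_le_mul_of_nonneg_right (mul_le_mul_of_nonneg_left h1 (by positivity)) (hπnn _)
      calc (((n:ℝ) + 1) * ((min (n + 1) c : ℕ):ℝ)) * π (n + 1)
          ≤ (((n:ℝ) + 1) * (c:ℝ)) * π (n + 1) := h2
        _ = (c:ℝ) * (((n:ℝ) + 1) * π (n + 1)) := by ring
  have sC2 : Summable (fun n : ℕ => (((n:ℝ) + 1) *
      (b 1 - (((min (n + 1) c : ℕ):ℝ) - 1) * b 0 - β)) * π (n + 1)) := by
    have hpt : ∀ n : ℕ, (((n:ℝ) + 1) * (b 1 - (((min (n + 1) c : ℕ):ℝ) - 1) * b 0 - β)) * π (n + 1) =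
        -(((∑' j : ℕ, b (j + 2)) + β) * (((n:ℝ) + 1) * π (n + 1)) +
          b 0 * ((((n:ℝ) + 1) * ((min (n + 1) c : ℕ):ℝ)) * π (n + 1))) := by
      intro n
      linear_combination (((n:ℝ) + 1) * π (n + 1)) * hb1
    refine Summable.congr ?_ (fun n => (hpt n).symm)
    exact ((sE1.mul_left _).add (sQ2.mul_left _)).neg
  have hCval2 : (∑' n : ℕ, (((n:ℝ) + 1) *
      (b 1 - (((min (n + 1) c : ℕ):ℝ) - 1) * b 0 - β)) * π (n + 1)) =
      -(((∑' j : ℕ, b (j + 2)) + β) * (∑' n : ℕ, ((n:ℝ) + 1) * π (n + 1)) +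
        b 0 * (∑' n : ℕ, (((n:ℝ) + 1) * ((min (n + 1) c : ℕ):ℝ)) * π (n + 1))) := by
    have hpt : ∀ n : ℕ, (((n:ℝ) + 1) * (b 1 - (((min (n + 1) c : ℕ):ℝ) - 1) * b 0 - β)) * π (n + 1) =
        -(((∑' j : ℕ, b (j + 2)) + β) * (((n:ℝ) + 1) * π (n + 1)) +
          b 0 * ((((n:ℝ) + 1) * ((min (n + 1) c : ℕ):ℝ)) * π (n + 1))) := by
      intro n
      linear_combination (((n:ℝ) + 1) * π (n + 1)) * hb1
    rw [tsum_congr hpt, tsum_neg, Summable.tsum_add ((sE1).mul_left _) ((sQ2).mul_left _),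
      tsum_mul_left, tsum_mul_left]
  have sT2v : Summable (fun n : ℕ => (((n:ℝ) + 1) * ((min (n + 2) c : ℕ):ℝ)) * π (n + 2)) := by
    refine Summable.of_nonneg_of_le (fun n => ?_) (fun n => ?_) (sE2.mul_left (c:ℝ))
    · exact mul_nonneg (mul_nonneg (by positivity) (by positivity)) (hπnn _)
    · have h1 : ((min (n + 2) c : ℕ):ℝ) ≤ (c:ℝ) := by exact_mod_cast min_le_right (n+2) c
      calc (((n:ℝ) + 1) * ((min (n + 2) c : ℕ):ℝ)) * π (n + 2)
          ≤ (((n:ℝ) + 2) * (c:ℝ)) * π (n + 2) := by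
            refine mul_le_mul_of_nonneg_right ?_ (hπnn _)
            refine mul_le_mul (by linarith) h1 (by positivity) (by linarith)
        _ = (c:ℝ) * (((n:ℝ) + 2) * π (n + 2)) := by ring
  have sD2 : Summable (fun n : ℕ => (((n:ℝ) + 1) * (((min (n + 2) c : ℕ):ℝ) * b 0)) * π (n + 2)) := by
    refine (sT2v.mul_left (b 0)).congr (fun n => by ring)
  have hDval2 : (∑' n : ℕ, (((n:ℝ) + 1) * (((min (n + 2) c : ℕ):ℝ) * b 0)) * π (n + 2)) =
      b 0 * (∑' n : ℕ, (((n:ℝ) + 1) * ((min (n + 2) c : ℕ):ℝ)) * π (n + 2)) := by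
    rw [← tsum_mul_left]
    exact tsum_congr (fun n => by ring)
  have sM : Summable (fun n => ((min (n + 1) c : ℕ):ℝ) * π (n + 1)) :=
    summable_bdd_mul (c:ℝ) sπ1 (fun n => hπnn _) (fun n => by
      rw [abs_of_nonneg (by positivity)]; exact_mod_cast min_le_right (n+1) c)
  have hT2val : (∑' n : ℕ, (((n:ℝ) + 1) * ((min (n + 2) c : ℕ):ℝ)) * π (n + 2)) =
      (∑' n : ℕ, (((n:ℝ) + 1) * ((min (n + 1) c : ℕ):ℝ)) * π (n + 1)) -
        (∑' n : ℕ, ((min (n + 1) c : ℕ):ℝ) * π (n + 1)) := by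
    have sQ2s : Summable (fun n => (((n + 1 : ℕ):ℝ) + 1) * ((min (n + 2) c : ℕ):ℝ) * π (n + 2)) := by
      refine ((summable_nat_add_iff 1).mpr sQ2).congr (fun n => ?_)
      rw [show n + 1 + 1 = n + 2 from rfl]
    have sMs : Summable (fun n => ((min (n + 2) c : ℕ):ℝ) * π (n + 2)) := by
      refine ((summable_nat_add_iff 1).mpr sM).congr (fun n => ?_)
      rw [show n + 1 + 1 = n + 2 from rfl]
    have hQsplit : (∑' n : ℕ, (((n:ℝ) + 1) * ((min (n + 1) c : ℕ):ℝ)) * π (n + 1)) =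
        π 1 + ∑' n : ℕ, (((n + 1 : ℕ):ℝ) + 1) * ((min (n + 2) c : ℕ):ℝ) * π (n + 2) := by
      rw [Summable.tsum_eq_zero_add sQ2]
      have e0 : ((((0:ℕ):ℝ) + 1) * ((min (0 + 1) c : ℕ):ℝ)) * π (0 + 1) = π 1 := by
        rw [show min (0 + 1) c = 1 by omega]
        norm_num
      rw [e0]
    have hMsplit : (∑' n : ℕ, ((min (n + 1) c : ℕ):ℝ) * π (n + 1)) =
        π 1 + ∑' n : ℕ, ((min (n + 2) c : ℕ):ℝ) * π (n + 2) := by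
      rw [Summable.tsum_eq_zero_add sM]
      have e0 : ((min (0 + 1) c : ℕ):ℝ) * π (0 + 1) = π 1 := by
        rw [show min (0 + 1) c = 1 by omega]
        norm_num
      rw [e0]
    rw [hQsplit, hMsplit]
    have : (∑' n : ℕ, (((n:ℝ) + 1) * ((min (n + 2) c : ℕ):ℝ)) * π (n + 2)) =
        ∑' n : ℕ, ((((n + 1 : ℕ):ℝ) + 1) * ((min (n + 2) c : ℕ):ℝ) * π (n + 2) -
          ((min (n + 2) c : ℕ):ℝ) * π (n + 2)) := by
      refine tsum_congr (fun n => ?_)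
      push_cast
      ring
    rw [this, Summable.tsum_sub sQ2s sMs]
    ring
  have hMval : (∑' n : ℕ, ((min (n + 1) c : ℕ):ℝ) * π (n + 1)) =
      (c:ℝ) * (1 - π 0) - ∑ k ∈ Finset.Icc 1 (c - 1), ((c:ℝ) - (k:ℝ)) * π k := by
    have hpt : ∀ n : ℕ, ((min (n + 1) c : ℕ):ℝ) * π (n + 1) =
        (c:ℝ) * π (n + 1) - ((c - min (n + 1) c : ℕ):ℝ) * π (n + 1) := by
      intro n
      rw [Nat.cast_sub (min_le_right _ _)]
      ring
    have sr : Summable (fun n => ((c - min (n + 1) c : ℕ):ℝ) * π (n + 1)) := by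
      refine summable_of_ne_finset_zero (s := Finset.range (c - 1)) (fun n hn => ?_)
      have hn' : ¬ n < c - 1 := fun h => hn (Finset.mem_range.mpr h)
      have : c - min (n + 1) c = 0 := by omega
      rw [this]
      norm_num
    have hrval : (∑' n : ℕ, ((c - min (n + 1) c : ℕ):ℝ) * π (n + 1)) =
        ∑ n ∈ Finset.range (c - 1), ((c - min (n + 1) c : ℕ):ℝ) * π (n + 1) := by
      refine tsum_eq_sum (fun n hn => ?_)
      have hn' : ¬ n < c - 1 := fun h => hn (Finset.mem_range.mpr h)
      have : c - min (n + 1) c = 0 := by omega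
      rw [this]
      norm_num
    have hSc : (∑ n ∈ Finset.range (c - 1), ((c - min (n + 1) c : ℕ):ℝ) * π (n + 1)) =
        ∑ k ∈ Finset.Icc 1 (c - 1), ((c:ℝ) - (k:ℝ)) * π k := by
      rw [sum_Icc_one (fun k => ((c:ℝ) - (k:ℝ)) * π k) (c - 1)]
      refine Finset.sum_congr rfl (fun i hi => ?_)
      have hi' : i < c - 1 := Finset.mem_range.mp hi
      have h1 : min (i + 1) c = i + 1 := by omega
      rw [h1, Nat.cast_sub (by omega : i + 1 ≤ c)]
    rw [tsum_congr hpt, Summable.tsum_sub (sπ1.mul_left _) sr, tsum_mul_left, htail, hrval, hSc]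
  -- combine
  have h02 : ∀ n : ℕ, (((n:ℝ) + 1) * π 0) * hh (n + 1) + ((n:ℝ) + 1) * Cv b π (n + 1) +
      (((n:ℝ) + 1) * (b 1 - (((min (n + 1) c : ℕ):ℝ) - 1) * b 0 - β)) * π (n + 1) +
      (((n:ℝ) + 1) * (((min (n + 2) c : ℕ):ℝ) * b 0)) * π (n + 2) = 0 := by
    intro n
    have h := hEq n
    linear_combination ((n:ℝ) + 1) * h
  obtain ⟨sD2'', heq2⟩ := tsum_four_split sA2 sB2' sC2 h02
  have tAval : (∑' n : ℕ, (((n:ℝ) + 1) * π 0) * hh (n + 1)) =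
      (∑' j : ℕ, ((j:ℝ) + 1) * hh (j + 1)) * π 0 := by
    rw [← tsum_mul_right]
    exact tsum_congr (fun n => by ring)
  have hE1 : β * (∑' j : ℕ, (j : ℝ) * π j) =
      π 0 * (∑' j : ℕ, ((j:ℝ) + 1) * hh (j + 1)) +
      ((∑' j : ℕ, ((j:ℝ) + 1) * b (j + 2)) - (c:ℝ) * b 0) * (1 - π 0) +
      b 0 * ∑ k ∈ Finset.Icc 1 (c - 1), ((c:ℝ) - (k:ℝ)) * π k := by
    rw [tAval, hBval, hCval2, hDval2, hT2val, hMval] at heq2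
    rw [hEshift]
    linarith [heq2]

  -- Step 3: generating-function identity at uβ
  have hpow_le : ∀ n : ℕ, |uβ ^ (n + 1)| ≤ 1 := by
    intro n
    rw [abs_of_nonneg (by positivity)]
    exact pow_le_one₀ hu0' hu1.le
  have sGp : Summable (fun n : ℕ => uβ ^ (n + 1) * π (n + 1)) :=
    summable_bdd_mul 1 sπ1 (fun n => hπnn _) hpow_le
  have sA3 : Summable (fun n : ℕ => (uβ ^ (n + 1) * π 0) * hh (n + 1)) := by
    refine summable_bdd_mul 1 hhsum hhnn (fun n => ?_)
    rw [abs_mul]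
    calc |uβ ^ (n + 1)| * |π 0| ≤ 1 * 1 := by
          refine mul_le_mul (hpow_le n) ?_ (abs_nonneg _) (by norm_num)
          rw [abs_of_nonneg (hπnn 0)]; exact hπ0le
      _ = 1 := by norm_num
  have sB3 : Summable (fun n : ℕ => uβ ^ (n + 1) * Cv b π (n + 1)) :=
    summable_bdd_mul 1 hCvsum (fun n => Cv_nonneg b π hbnn hπnn _) hpow_le
  have sMu : Summable (fun n : ℕ => (uβ ^ (n + 1) * ((min (n + 1) c : ℕ):ℝ)) * π (n + 1)) := by
    refine summable_bdd_mul (c:ℝ) sπ1 (fun n => hπnn _) (fun n => ?_)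
    rw [abs_mul]
    have h2 : |((min (n + 1) c : ℕ):ℝ)| ≤ (c:ℝ) := by
      rw [abs_of_nonneg (by positivity)]; exact_mod_cast min_le_right (n+1) c
    calc |uβ ^ (n + 1)| * |((min (n + 1) c : ℕ):ℝ)| ≤ 1 * (c:ℝ) :=
          mul_le_mul (hpow_le n) h2 (abs_nonneg _) (by norm_num)
      _ = (c:ℝ) := one_mul _
  have sC3 : Summable (fun n : ℕ => (uβ ^ (n + 1) *
      (b 1 - (((min (n + 1) c : ℕ):ℝ) - 1) * b 0 - β)) * π (n + 1)) := by
    have hpt : ∀ n : ℕ, (uβ ^ (n + 1) * (b 1 - (((min (n + 1) c : ℕ):ℝ) - 1) * b 0 - β)) * π (n + 1) =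
        -(((∑' j : ℕ, b (j + 2)) + β) * (uβ ^ (n + 1) * π (n + 1)) +
          b 0 * ((uβ ^ (n + 1) * ((min (n + 1) c : ℕ):ℝ)) * π (n + 1))) := by
      intro n
      linear_combination (uβ ^ (n + 1) * π (n + 1)) * hb1
    exact Summable.congr (((sGp.mul_left _).add (sMu.mul_left _)).neg) (fun n => (hpt n).symm)
  have sT3v : Summable (fun n : ℕ => (uβ ^ (n + 1) * ((min (n + 2) c : ℕ):ℝ)) * π (n + 2)) := by
    refine summable_bdd_mul (c:ℝ) sπ2 (fun n => hπnn _) (fun n => ?_)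
    rw [abs_mul]
    have h2 : |((min (n + 2) c : ℕ):ℝ)| ≤ (c:ℝ) := by
      rw [abs_of_nonneg (by positivity)]; exact_mod_cast min_le_right (n+2) c
    calc |uβ ^ (n + 1)| * |((min (n + 2) c : ℕ):ℝ)| ≤ 1 * (c:ℝ) :=
          mul_le_mul (hpow_le n) h2 (abs_nonneg _) (by norm_num)
      _ = (c:ℝ) := one_mul _
  -- values of the four pieces
  have tA3val : (∑' n : ℕ, (uβ ^ (n + 1) * π 0) * hh (n + 1)) = Hgen hh uβ * π 0 := by
    simp only [Hgen]
    rw [← tsum_mul_right]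
    exact tsum_congr (fun n => by ring)
  have sR' : Summable (fun j : ℕ => b (j + 2) * uβ ^ (j + 1)) := by
    refine Summable.of_nonneg_of_le (fun n => mul_nonneg (hbnn2 n) (by positivity))
      (fun n => ?_) sb2
    calc b (n + 2) * uβ ^ (n + 1) ≤ b (n + 2) * 1 :=
          mul_le_mul_of_nonneg_left (pow_le_one₀ hu0' hu1.le) (hbnn2 n)
      _ = b (n + 2) := mul_one _
  have prod3 : Summable (fun p : ℕ × ℕ => (uβ ^ (p.1 + 1) * π (p.1 + 1)) * (b (p.2 + 2) * uβ ^ (p.2 + 1))) :=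
    sGp.mul_of_nonneg sR' (fun n => mul_nonneg (by positivity) (hπnn _))
      (fun n => mul_nonneg (hbnn2 n) (by positivity))
  have cauchy3 : (∑' n : ℕ, uβ ^ (n + 1) * π (n + 1)) * (∑' j : ℕ, b (j + 2) * uβ ^ (j + 1)) =
      ∑' n : ℕ, ∑ k ∈ Finset.range (n + 1),
        (uβ ^ (k + 1) * π (k + 1)) * (b (n - k + 2) * uβ ^ (n - k + 1)) :=
    Summable.tsum_mul_tsum_eq_tsum_sum_range
      (f := fun k => uβ ^ (k + 1) * π (k + 1)) (g := fun j => b (j + 2) * uβ ^ (j + 1)) sGp sR' prod3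
  have hterm3 : ∀ n : ℕ, uβ ^ (n + 1 + 1) * Cv b π (n + 1 + 1) =
      ∑ k ∈ Finset.range (n + 1), (uβ ^ (k + 1) * π (k + 1)) * (b (n - k + 2) * uβ ^ (n - k + 1)) := by
    intro n
    rw [show n + 1 + 1 = n + 2 from rfl, Cv_succ, Finset.mul_sum]
    refine Finset.sum_congr rfl (fun k hk => ?_)
    have hk' : k ≤ n := by simpa [Nat.lt_succ_iff] using Finset.mem_range.mp hk
    have hexp : (k + 1) + (n - k + 1) = n + 2 := by omega
    calc uβ ^ (n + 2) * (π (k + 1) * b (n - k + 2))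
        = (uβ ^ (k + 1) * uβ ^ (n - k + 1)) * (π (k + 1) * b (n - k + 2)) := by
          rw [← pow_add, hexp]
      _ = (uβ ^ (k + 1) * π (k + 1)) * (b (n - k + 2) * uβ ^ (n - k + 1)) := by ring
  have tB3val : (∑' n : ℕ, uβ ^ (n + 1) * Cv b π (n + 1)) =
      (∑' n : ℕ, uβ ^ (n + 1) * π (n + 1)) * (∑' j : ℕ, b (j + 2) * uβ ^ (j + 1)) := by
    rw [Summable.tsum_eq_zero_add sB3]
    have e1 : uβ ^ (0 + 1) * Cv b π (0 + 1) = 0 := by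
      rw [show (0 + 1 : ℕ) = 1 from rfl, Cv_one, mul_zero]
    rw [e1, zero_add, tsum_congr hterm3, ← cauchy3]
  have hCval3 : (∑' n : ℕ, (uβ ^ (n + 1) *
      (b 1 - (((min (n + 1) c : ℕ):ℝ) - 1) * b 0 - β)) * π (n + 1)) =
      -(((∑' j : ℕ, b (j + 2)) + β) * (∑' n : ℕ, uβ ^ (n + 1) * π (n + 1)) +
        b 0 * (∑' n : ℕ, (uβ ^ (n + 1) * ((min (n + 1) c : ℕ):ℝ)) * π (n + 1))) := by
    have hpt : ∀ n : ℕ, (uβ ^ (n + 1) * (b 1 - (((min (n + 1) c : ℕ):ℝ) - 1) * b 0 - β)) * π (n + 1) =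
        -(((∑' j : ℕ, b (j + 2)) + β) * (uβ ^ (n + 1) * π (n + 1)) +
          b 0 * ((uβ ^ (n + 1) * ((min (n + 1) c : ℕ):ℝ)) * π (n + 1))) := by
      intro n
      linear_combination (uβ ^ (n + 1) * π (n + 1)) * hb1
    rw [tsum_congr hpt, tsum_neg, Summable.tsum_add (sGp.mul_left _) (sMu.mul_left _),
      tsum_mul_left, tsum_mul_left]
  have sD3 : Summable (fun n : ℕ => (uβ ^ (n + 1) * (((min (n + 2) c : ℕ):ℝ) * b 0)) * π (n + 2)) :=
    (sT3v.mul_left (b 0)).congr (fun n => by ring)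
  have hDval3 : (∑' n : ℕ, (uβ ^ (n + 1) * (((min (n + 2) c : ℕ):ℝ) * b 0)) * π (n + 2)) =
      b 0 * (∑' n : ℕ, (uβ ^ (n + 1) * ((min (n + 2) c : ℕ):ℝ)) * π (n + 2)) := by
    rw [← tsum_mul_left]
    exact tsum_congr (fun n => by ring)
  have hT3val : uβ * (∑' n : ℕ, (uβ ^ (n + 1) * ((min (n + 2) c : ℕ):ℝ)) * π (n + 2)) =
      (∑' n : ℕ, (uβ ^ (n + 1) * ((min (n + 1) c : ℕ):ℝ)) * π (n + 1)) - uβ * π 1 := by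
    have hMusplit : (∑' n : ℕ, (uβ ^ (n + 1) * ((min (n + 1) c : ℕ):ℝ)) * π (n + 1)) =
        uβ * π 1 + uβ * (∑' n : ℕ, (uβ ^ (n + 1) * ((min (n + 2) c : ℕ):ℝ)) * π (n + 2)) := by
      rw [Summable.tsum_eq_zero_add sMu]
      have e0 : (uβ ^ (0 + 1) * ((min (0 + 1) c : ℕ):ℝ)) * π (0 + 1) = uβ * π 1 := by
        rw [show min (0 + 1) c = 1 by omega]
        norm_num
      rw [e0, ← tsum_mul_left]
      congr 1
      refine tsum_congr (fun n => ?_)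
      rw [show n + 1 + 1 = n + 2 from rfl, pow_succ]
      ring
    linarith [hMusplit]
  have hMuval : (∑' n : ℕ, (uβ ^ (n + 1) * ((min (n + 1) c : ℕ):ℝ)) * π (n + 1)) =
      (c:ℝ) * (∑' n : ℕ, uβ ^ (n + 1) * π (n + 1)) -
        ∑ k ∈ Finset.Icc 1 (c - 1), ((c:ℝ) - (k:ℝ)) * π k * uβ ^ k := by
    have hpt : ∀ n : ℕ, (uβ ^ (n + 1) * ((min (n + 1) c : ℕ):ℝ)) * π (n + 1) =
        (c:ℝ) * (uβ ^ (n + 1) * π (n + 1)) -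
          (uβ ^ (n + 1) * ((c - min (n + 1) c : ℕ):ℝ)) * π (n + 1) := by
      intro n
      rw [Nat.cast_sub (min_le_right _ _)]
      ring
    have sr3 : Summable (fun n : ℕ => (uβ ^ (n + 1) * ((c - min (n + 1) c : ℕ):ℝ)) * π (n + 1)) := by
      refine summable_of_ne_finset_zero (s := Finset.range (c - 1)) (fun n hn => ?_)
      have hn' : ¬ n < c - 1 := fun h => hn (Finset.mem_range.mpr h)
      rw [show c - min (n + 1) c = 0 by omega]
      norm_num
    have hr3val : (∑' n : ℕ, (uβ ^ (n + 1) * ((c - min (n + 1) c : ℕ):ℝ)) * π (n + 1)) =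
        ∑ n ∈ Finset.range (c - 1), (uβ ^ (n + 1) * ((c - min (n + 1) c : ℕ):ℝ)) * π (n + 1) := by
      refine tsum_eq_sum (fun n hn => ?_)
      have hn' : ¬ n < c - 1 := fun h => hn (Finset.mem_range.mpr h)
      rw [show c - min (n + 1) c = 0 by omega]
      norm_num
    have hSuk : (∑ n ∈ Finset.range (c - 1), (uβ ^ (n + 1) * ((c - min (n + 1) c : ℕ):ℝ)) * π (n + 1)) =
        ∑ k ∈ Finset.Icc 1 (c - 1), ((c:ℝ) - (k:ℝ)) * π k * uβ ^ k := by
      rw [sum_Icc_one (fun k => ((c:ℝ) - (k:ℝ)) * π k * uβ ^ k) (c - 1)]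
      refine Finset.sum_congr rfl (fun i hi => ?_)
      have hi' : i < c - 1 := Finset.mem_range.mp hi
      rw [show min (i + 1) c = i + 1 by omega, Nat.cast_sub (by omega : i + 1 ≤ c)]
      ring
    rw [tsum_congr hpt, Summable.tsum_sub (sGp.mul_left _) sr3, tsum_mul_left, hr3val, hSuk]
  have hBu : Summable (fun j : ℕ => b j * uβ ^ j) := by
    refine Summable.of_norm_bounded hbsum.abs (fun j => ?_)
    rw [norm_mul, norm_pow, Real.norm_eq_abs, Real.norm_eq_abs, abs_of_nonneg hu0']
    calc |b j| * uβ ^ j ≤ |b j| * 1 :=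
          mul_le_mul_of_nonneg_left (pow_le_one₀ hu0' hu1.le) (abs_nonneg _)
      _ = |b j| := mul_one _
  have hRroot : uβ * (∑' j : ℕ, b (j + 2) * uβ ^ (j + 1)) =
      β * uβ + (∑' j : ℕ, b (j + 2)) * uβ - (c:ℝ) * b 0 * (1 - uβ) := by
    have hBu1 : Summable (fun n : ℕ => b (n + 1) * uβ ^ (n + 1)) :=
      (summable_nat_add_iff 1).mpr hBu
    have h1 : (∑' j : ℕ, b j * uβ ^ j) =
        b 0 + (b 1 * uβ ^ (0 + 1) + (∑' j : ℕ, b (j + 2) * uβ ^ (j + 1)) * uβ) := by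
      rw [Summable.tsum_eq_zero_add hBu, Summable.tsum_eq_zero_add hBu1]
      have e2 : (∑' n : ℕ, b (n + 1 + 1) * uβ ^ (n + 1 + 1)) =
          (∑' j : ℕ, b (j + 2) * uβ ^ (j + 1)) * uβ := by
        rw [← tsum_mul_right]
        refine tsum_congr (fun n => ?_)
        rw [show n + 1 + 1 = n + 2 from rfl, pow_succ]
        ring
      rw [e2]
      norm_num
    have h2 : (∑' j : ℕ, b j * uβ ^ j) + ((c:ℝ) - 1) * b 0 * (1 - uβ) = β * uβ := by
      have := huβroot
      simp only [Bi] at this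
      exact this
    rw [h1] at h2
    have hpow1 : uβ ^ (0 + 1) = uβ := by norm_num
    rw [hpow1] at h2
    linear_combination h2 - uβ * hb1
  have heq0' : b 0 * π 1 = ((∑' j : ℕ, hh (j + 1)) + β) * π 0 - β := by linarith [heq0]
  have h03 : ∀ n : ℕ, (uβ ^ (n + 1) * π 0) * hh (n + 1) + uβ ^ (n + 1) * Cv b π (n + 1) +
      (uβ ^ (n + 1) * (b 1 - (((min (n + 1) c : ℕ):ℝ) - 1) * b 0 - β)) * π (n + 1) +
      (uβ ^ (n + 1) * (((min (n + 2) c : ℕ):ℝ) * b 0)) * π (n + 2) = 0 := by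
    intro n
    have h := hEq n
    linear_combination uβ ^ (n + 1) * h
  obtain ⟨sD3'', heq3⟩ := tsum_four_split sA3 sB3 sC3 h03
  rw [tA3val, tB3val, hCval3, hDval3] at heq3
  have hSS : b 0 * (1 - uβ) * (∑ k ∈ Finset.Icc 1 (c - 1), ((c:ℝ) - (k:ℝ)) * π k * uβ ^ k) =
      uβ * (π 0 * (Hgen hh uβ - ∑' j : ℕ, hh (j + 1)) + β * (1 - π 0)) := by
    linear_combination (-uβ) * heq3 + (∑' n : ℕ, uβ ^ (n + 1) * π (n + 1)) * hRroot +
      b 0 * hT3val + ((1 - uβ) * b 0) * hMuval + (-uβ) * heq0'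
  -- Final assembly
  refine ⟨hE, ?_⟩
  have hfin : uβ * (∑ k ∈ Finset.Icc 1 (c - 1),
      π k * ((c : ℝ) - (k : ℝ)) * b 0 * (β + uβ ^ (k - 1) * (1 - uβ) *
        ((∑' j : ℕ, ((j : ℝ) + 1) * b (j + 2)) - (c : ℝ) * b 0))) =
      uβ * β * b 0 * (∑ k ∈ Finset.Icc 1 (c - 1), ((c:ℝ) - (k:ℝ)) * π k) +
      ((∑' j : ℕ, ((j : ℝ) + 1) * b (j + 2)) - (c : ℝ) * b 0) * (b 0 * (1 - uβ) *
        (∑ k ∈ Finset.Icc 1 (c - 1), ((c:ℝ) - (k:ℝ)) * π k * uβ ^ k)) := by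
    rw [Finset.mul_sum, Finset.mul_sum, Finset.mul_sum, Finset.mul_sum, ← Finset.sum_add_distrib]
    refine Finset.sum_congr rfl (fun k hk => ?_)
    have hk1 : 1 ≤ k := (Finset.mem_Icc.mp hk).1
    have hpow : uβ ^ (k - 1) * uβ = uβ ^ k := by
      rw [← pow_succ]
      congr 1
      omega
    linear_combination (π k * ((c:ℝ) - (k:ℝ)) * b 0 * (1 - uβ) *
      ((∑' j : ℕ, ((j : ℝ) + 1) * b (j + 2)) - (c : ℝ) * b 0)) * hpow
  have hβne : β ≠ 0 := ne_of_gt hβ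
  have hune : uβ ≠ 0 := ne_of_gt hu0
  have hX : (∑' j : ℕ, (j : ℝ) * π j) * (β ^ 2 * uβ) =
      (π 0 * ((Hgen hh uβ - (∑' j : ℕ, hh (j + 1)) -
            (∑' j : ℕ, ((j : ℝ) + 1) * hh (j + 1))) * (-β) -
          (Hgen hh uβ - (∑' j : ℕ, hh (j + 1))) *
            (((∑' j : ℕ, ((j : ℝ) + 1) * b (j + 2)) - (c : ℝ) * b 0) - β)) +
        (∑ k ∈ Finset.Icc 1 (c - 1),
            π k * ((c : ℝ) - (k : ℝ)) * b 0 *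
              (β + uβ ^ (k - 1) * (1 - uβ) *
                ((∑' j : ℕ, ((j : ℝ) + 1) * b (j + 2)) - (c : ℝ) * b 0)))) * uβ := by
    linear_combination (uβ * β) * hE1 - hfin -
      ((∑' j : ℕ, ((j : ℝ) + 1) * b (j + 2)) - (c : ℝ) * b 0) * hSS
  calc (∑' j : ℕ, (j : ℝ) * π j)
      = ((∑' j : ℕ, (j : ℝ) * π j) * (β ^ 2 * uβ)) / (β ^ 2 * uβ) := by
        field_simp
    _ = ((π 0 * ((Hgen hh uβ - (∑' j : ℕ, hh (j + 1)) -
            (∑' j : ℕ, ((j : ℝ) + 1) * hh (j + 1))) * (-β) -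
          (Hgen hh uβ - (∑' j : ℕ, hh (j + 1))) *
            (((∑' j : ℕ, ((j : ℝ) + 1) * b (j + 2)) - (c : ℝ) * b 0) - β)) +
        (∑ k ∈ Finset.Icc 1 (c - 1),
            π k * ((c : ℝ) - (k : ℝ)) * b 0 *
              (β + uβ ^ (k - 1) * (1 - uβ) *
                ((∑' j : ℕ, ((j : ℝ) + 1) * b (j + 2)) - (c : ℝ) * b 0)))) * uβ) / (β ^ 2 * uβ) := by
        rw [hX]
    _ = _ := by
        rw [mul_div_mul_right _ _ hune]
        ring
end

section
/- Let β > 0. For j, n ∈ ℕ define p_{jn}(t) = e^{−βt}·p̃_{jn}(t) + β·∫_0^t e^{−βτ} p̃_{0n}(τ) dτ (t ≥ 0). Then: p_{jn}(0) = δ_{jn}; ∑_{n≥0} p_{jn}(t) = 1 for all t ≥ 0; and the functions p_{jn} satisfy the forward equations of the M^X/M/c queue with resurrection and catastrophe rate β, namely p′_{j0}(t) = −(h+β) p_{j0}(t) + b_0 p_{j1}(t) + β; for 1 ≤ n ≤ c−1: p′_{jn}(t) = h_n p_{j0}(t) + ∑_{k=1}^{n−1} b_{n−k+1} p_{jk}(t)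 + (b_1 − (n−1) b_0 − β) p_{jn}(t) + (n+1) b_0 p_{j,n+1}(t); and for n ≥ c: p′_{jn}(t) = h_n p_{j0}(t) + ∑_{k=1}^{n−1} b_{n−k+1} p_{jk}(t) + (b_1 − (c−1) b_0 − β) p_{jn}(t) + c b_0 p_{j,n+1}(t). -/
open Set Filter Topology

/-- The transition function of the queue with catastrophe rate `β`, built from the
transition function `pt` of the queue without catastrophes:
`p_{jn}(t) = e^{-βt} p̃_{jn}(t) + β ∫_0^t e^{-βτ} p̃_{0n}(τ) dτ`. -/
noncomputable def pCat (β : ℝ) (pt : ℕ → ℕ → ℝ → ℝ) (j n : ℕ) (t : ℝ) : ℝ :=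
  Real.exp (-β * t) * pt j n t + β * ∫ τ in (0 : ℝ)..t, Real.exp (-β * τ) * pt 0 n τ

open MeasureTheory intervalIntegral ENNReal

section helpers

variable (β : ℝ) (pt : ℕ → ℕ → ℝ → ℝ)

lemma gext_cont (hptcont : ∀ j n : ℕ, ContinuousOn (pt j n) (Set.Ici 0)) (k : ℕ) :
    Continuous (fun τ : ℝ => Real.exp (-β * τ) * pt 0 k (max τ 0)) := by
  have h1 : Continuous (fun τ : ℝ => pt 0 k (max τ 0)) :=
    (hptcont 0 k).comp_continuous (continuous_id.max continuous_const)
      (fun x => le_max_right x 0)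
  exact ((Real.continuous_exp.comp (continuous_const.mul continuous_id))).mul h1

lemma g_contOn (hptcont : ∀ j n : ℕ, ContinuousOn (pt j n) (Set.Ici 0)) (k : ℕ)
    {u : ℝ} (hu : 0 ≤ u) :
    ContinuousOn (fun τ : ℝ => Real.exp (-β * τ) * pt 0 k τ) (Set.Icc 0 u) :=
  ((Real.continuous_exp.comp (continuous_const.mul continuous_id)).continuousOn).mul
    ((hptcont 0 k).mono Icc_subset_Ici_self)

lemma g_intble (hptcont : ∀ j n : ℕ, ContinuousOn (pt j n) (Set.Ici 0)) (k : ℕ)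
    {u : ℝ} (hu : 0 ≤ u) :
    IntervalIntegrable (fun τ : ℝ => Real.exp (-β * τ) * pt 0 k τ) volume 0 u := by
  apply ContinuousOn.intervalIntegrable
  rw [uIcc_of_le hu]
  exact g_contOn β pt hptcont k hu

lemma Ideriv (hptcont : ∀ j n : ℕ, ContinuousOn (pt j n) (Set.Ici 0)) (k : ℕ)
    {t : ℝ} (ht : 0 ≤ t) :
    HasDerivWithinAt (fun u => ∫ τ in (0 : ℝ)..u, Real.exp (-β * τ) * pt 0 k τ)
      (Real.exp (-β * t) * pt 0 k t) (Set.Ici 0) t := by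
  set G := fun τ : ℝ => Real.exp (-β * τ) * pt 0 k (max τ 0) with hG
  have hGc : Continuous G := gext_cont β pt hptcont k
  have hd : HasDerivAt (fun u => ∫ τ in (0 : ℝ)..u, G τ) (G t) t :=
    intervalIntegral.integral_hasDerivAt_right (hGc.intervalIntegrable _ _)
      (hGc.stronglyMeasurableAtFilter _ _) hGc.continuousAt
  have heq : ∀ u ∈ Set.Ici (0:ℝ),
      (∫ τ in (0 : ℝ)..u, Real.exp (-β * τ) * pt 0 k τ) = ∫ τ in (0 : ℝ)..u, G τ := by
    intro u hu
    apply intervalIntegral.integral_congr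
    intro τ hτ
    rw [uIcc_of_le hu] at hτ
    simp only [hG, max_eq_left hτ.1]
  have := (hd.hasDerivWithinAt (s := Set.Ici 0)).congr heq (heq t ht)
  simpa [hG, max_eq_left ht] using this

lemma expDeriv (x : ℝ) :
    HasDerivAt (fun τ : ℝ => Real.exp (-β * τ)) (Real.exp (-β * x) * -β) x := by
  have : HasDerivAt (fun τ : ℝ => Real.exp (-β * τ)) (Real.exp (-β * x) * (-β * 1)) x :=
    ((hasDerivAt_id x).const_mul (-β)).exp
  simpa [Finset.sum_fn] using this

lemma keyDeriv (hptcont : ∀ j n : ℕ, ContinuousOn (pt j n) (Set.Ici 0))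
    (hpt0 : ∀ j n : ℕ, pt j n 0 = if j = n then (1 : ℝ) else 0)
    (F : Finset ℕ) (a : ℕ → ℝ) (n : ℕ)
    (hrow : ∀ j : ℕ, ∀ t : ℝ, 0 ≤ t →
      HasDerivWithinAt (pt j n) (∑ k ∈ F, a k * pt j k t) (Set.Ici 0) t)
    (j : ℕ) (t : ℝ) (ht : 0 ≤ t) :
    HasDerivWithinAt (pCat β pt j n)
      ((∑ k ∈ F, a k * pCat β pt j k t) - β * pCat β pt j n t +
        β * (if n = 0 then 1 else 0)) (Set.Ici 0) t := by
  set I := fun (k : ℕ) (s : ℝ) => ∫ τ in (0 : ℝ)..s, Real.exp (-β * τ) * pt 0 k τ with hIdef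
  set f' := fun τ : ℝ => Real.exp (-β * τ) * -β * pt 0 n τ +
      Real.exp (-β * τ) * (∑ k ∈ F, a k * pt 0 k τ) with hf'def
  have hterm : ∀ (j' : ℕ) (τ : ℝ), Real.exp (-β * τ) * (∑ k ∈ F, a k * pt j' k τ)
      = ∑ k ∈ F, a k * (Real.exp (-β * τ) * pt j' k τ) := by
    intro j' τ
    rw [Finset.mul_sum]
    exact Finset.sum_congr rfl fun k _ => by ring
  have K : Real.exp (-β * t) * pt 0 n t - (if n = 0 then (1:ℝ) else 0)
      = (∑ k ∈ F, a k * I k t) - β * I n t := by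
    have hFTC : (∫ τ in (0:ℝ)..t, f' τ)
        = Real.exp (-β * t) * pt 0 n t - Real.exp (-β * 0) * pt 0 n 0 := by
      apply intervalIntegral.integral_eq_sub_of_hasDeriv_right_of_le ht
      · exact g_contOn β pt hptcont n ht
      · intro x hx
        have hx0 : (0:ℝ) ≤ x := le_of_lt hx.1
        have hprod := ((expDeriv β x).hasDerivWithinAt (s := Set.Ici 0)).mul (hrow 0 x hx0)
        have hsub : Set.Ioi x ⊆ Set.Ici (0:ℝ) := fun y hy => le_of_lt (lt_of_le_of_lt hx0 hy)
        exact hprod.mono hsub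
      · apply ContinuousOn.intervalIntegrable
        rw [uIcc_of_le ht, hf'def]
        apply ContinuousOn.add
        · exact (((Real.continuous_exp.comp
            (continuous_const.mul continuous_id)).continuousOn).mul continuousOn_const).mul
            ((hptcont 0 n).mono Icc_subset_Ici_self)
        · exact ((Real.continuous_exp.comp
            (continuous_const.mul continuous_id)).continuousOn).mul
            (continuousOn_finset_sum F (fun k _ => continuousOn_const.mul
              ((hptcont 0 k).mono Icc_subset_Ici_self)))
    have hsumint : IntervalIntegrable
        (fun τ => ∑ k ∈ F, a k * (Real.exp (-β * τ) * pt 0 k τ)) volume 0 t := by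
      have := IntervalIntegrable.sum F (μ := volume) (a := 0) (b := t)
        (f := fun k τ => a k * (Real.exp (-β * τ) * pt 0 k τ))
        (fun k _ => (g_intble β pt hptcont k ht).const_mul _)
      simpa [Finset.sum_fn] using this
    have hbint : IntervalIntegrable
        (fun τ => β * (Real.exp (-β * τ) * pt 0 n τ)) volume 0 t :=
      (g_intble β pt hptcont n ht).const_mul _
    have hlin : (∫ τ in (0:ℝ)..t, f' τ) = (∑ k ∈ F, a k * I k t) - β * I n t := by
      have e1 : (∫ τ in (0:ℝ)..t, f' τ)
          = (∫ τ in (0:ℝ)..t, ∑ k ∈ F, a k * (Real.exp (-β * τ) * pt 0 k τ))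
            - ∫ τ in (0:ℝ)..t, β * (Real.exp (-β * τ) * pt 0 n τ) := by
        rw [← intervalIntegral.integral_sub hsumint hbint]
        apply intervalIntegral.integral_congr
        intro τ _
        simp only [hf'def]
        rw [hterm 0 τ]
        ring
      rw [e1, intervalIntegral.integral_finset_sum
          (fun k _ => (g_intble β pt hptcont k ht).const_mul _),
        intervalIntegral.integral_const_mul]
      congr 1
      exact Finset.sum_congr rfl fun k _ => intervalIntegral.integral_const_mul _ _
    rw [hlin, hpt0 0 n] at hFTC
    simp only [mul_zero, neg_zero, Real.exp_zero, one_mul] at hFTC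
    have hif : (if n = 0 then (1:ℝ) else 0) = if (0:ℕ) = n then 1 else 0 := by
      by_cases h : n = 0 <;> simp [h, eq_comm]
    rw [hif]
    exact hFTC.symm
  have hd : HasDerivWithinAt (pCat β pt j n)
      ((Real.exp (-β * t) * -β * pt j n t + Real.exp (-β * t) * (∑ k ∈ F, a k * pt j k t)) +
        β * (Real.exp (-β * t) * pt 0 n t)) (Set.Ici 0) t := by
    have h1 := ((expDeriv β t).hasDerivWithinAt (s := Set.Ici 0)).mul (hrow j t ht)
    have h2 := (Ideriv β pt hptcont n ht).const_mul β
    exact h1.add h2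
  have hval : (∑ k ∈ F, a k * pCat β pt j k t) - β * pCat β pt j n t +
        β * (if n = 0 then 1 else 0)
      = (Real.exp (-β * t) * -β * pt j n t + Real.exp (-β * t) * (∑ k ∈ F, a k * pt j k t)) +
        β * (Real.exp (-β * t) * pt 0 n t) := by
    have hsum : ∑ k ∈ F, a k * pCat β pt j k t
        = Real.exp (-β * t) * (∑ k ∈ F, a k * pt j k t) + β * (∑ k ∈ F, a k * I k t) := by
      simp only [pCat, mul_add, Finset.sum_add_distrib]
      rw [hterm j t, Finset.mul_sum]
      congr 1
      exact Finset.sum_congr rfl fun k _ => by ring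
    rw [hsum]
    have hpc : pCat β pt j n t = Real.exp (-β * t) * pt j n t + β * I n t := rfl
    rw [hpc]
    linear_combination (-β) * K
  exact hval ▸ hd

end helpers

def rowF (n : ℕ) : Finset ℕ := insert 0 (insert n (insert (n+1) (Finset.Icc 1 (n-1))))

noncomputable def rowA (b : ℕ → ℝ) (hhn C D : ℝ) (n k : ℕ) : ℝ :=
  if k = 0 then hhn else if k = n then C else if k = n+1 then D else b (n - k + 1)

lemma rowSum (b : ℕ → ℝ) (hhn C D : ℝ) (n : ℕ) (hn : 1 ≤ n) (q : ℕ → ℝ) :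
    ∑ k ∈ rowF n, rowA b hhn C D n k * q k
      = hhn * q 0 + (∑ k ∈ Finset.Icc 1 (n-1), b (n - k + 1) * q k) + C * q n + D * q (n+1) := by
  have h0 : (0:ℕ) ∉ insert n (insert (n+1) (Finset.Icc 1 (n-1))) := by
    simp only [Finset.mem_insert, Finset.mem_Icc]
    omega
  have hn' : n ∉ insert (n+1) (Finset.Icc 1 (n-1)) := by
    simp only [Finset.mem_insert, Finset.mem_Icc]
    omega
  have hn1 : n + 1 ∉ Finset.Icc 1 (n-1) := by
    simp only [Finset.mem_Icc]
    omega
  rw [rowF, Finset.sum_insert h0, Finset.sum_insert hn', Finset.sum_insert hn1]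
  have e0 : rowA b hhn C D n 0 = hhn := by simp [rowA]
  have en : rowA b hhn C D n n = C := by
    rw [rowA, if_neg (by omega), if_pos rfl]
  have en1 : rowA b hhn C D n (n+1) = D := by
    rw [rowA, if_neg (by omega), if_neg (by omega), if_pos rfl]
  have hicc : ∀ k ∈ Finset.Icc 1 (n-1), rowA b hhn C D n k * q k = b (n - k + 1) * q k := by
    intro k hk
    simp only [Finset.mem_Icc] at hk
    rw [rowA, if_neg (by omega), if_neg (by omega), if_neg (by omega)]
  rw [e0, en, en1, Finset.sum_congr rfl hicc]
  ring

lemma tsumOne (hβ : 0 < β)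
    (hptnn : ∀ j n : ℕ, ∀ t : ℝ, 0 ≤ t → 0 ≤ pt j n t)
    (hptcont : ∀ j n : ℕ, ContinuousOn (pt j n) (Set.Ici 0))
    (hptsum : ∀ j : ℕ, ∀ t : ℝ, 0 ≤ t → (∑' n : ℕ, pt j n t) = 1)
    (j : ℕ) (t : ℝ) (ht : 0 ≤ t) :
    (∑' n : ℕ, pCat β pt j n t) = 1 := by
  have hsummpt : ∀ j' : ℕ, ∀ s : ℝ, 0 ≤ s → Summable (fun n => pt j' n s) := by
    intro j' s hs
    by_contra hns
    have := hptsum j' s hs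
    rw [tsum_eq_zero_of_not_summable hns] at this
    norm_num at this
  have hg : ∀ n : ℕ, AEStronglyMeasurable (fun τ => Real.exp (-β * τ) * pt 0 n τ)
      (volume.restrict (Set.Ioc 0 t)) := fun n =>
    ((g_contOn β pt hptcont n ht).mono Ioc_subset_Icc_self).aestronglyMeasurable
      measurableSet_Ioc
  have hnormsum : ∀ τ ∈ Set.Ioc (0:ℝ) t,
      (∑' n : ℕ, (‖Real.exp (-β * τ) * pt 0 n τ‖₊ : ℝ≥0∞))
        = ENNReal.ofReal (Real.exp (-β * τ)) := by
    intro τ hτ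
    have hτ0 : (0:ℝ) ≤ τ := hτ.1.le
    have hnn : ∀ n : ℕ, 0 ≤ Real.exp (-β * τ) * pt 0 n τ :=
      fun n => mul_nonneg (Real.exp_nonneg _) (hptnn 0 n τ hτ0)
    have hs : Summable (fun n => Real.exp (-β * τ) * pt 0 n τ) :=
      (hsummpt 0 τ hτ0).mul_left _
    calc (∑' n : ℕ, (‖Real.exp (-β * τ) * pt 0 n τ‖₊ : ℝ≥0∞))
        = ∑' n : ℕ, ENNReal.ofReal (Real.exp (-β * τ) * pt 0 n τ) :=
          tsum_congr fun n => Real.enorm_eq_ofReal (hnn n)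
      _ = ENNReal.ofReal (∑' n : ℕ, Real.exp (-β * τ) * pt 0 n τ) :=
          (ENNReal.ofReal_tsum_of_nonneg hnn hs).symm
      _ = ENNReal.ofReal (Real.exp (-β * τ)) := by
          rw [_root_.tsum_mul_left, hptsum 0 τ hτ0, mul_one]
  have hfin : (∑' n : ℕ, ∫⁻ τ in Set.Ioc (0:ℝ) t, ‖Real.exp (-β * τ) * pt 0 n τ‖₊) ≠ ⊤ := by
    simp only [← enorm_eq_nnnorm]
    rw [← MeasureTheory.lintegral_tsum (fun n => (hg n).enorm)]
    have hb : (∫⁻ τ in Set.Ioc (0:ℝ) t, ∑' n : ℕ, (‖Real.exp (-β * τ) * pt 0 n τ‖₊ : ℝ≥0∞))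
        ≤ ∫⁻ _ in Set.Ioc (0:ℝ) t, 1 := by
      apply lintegral_mono_ae
      filter_upwards [ae_restrict_mem measurableSet_Ioc] with τ hτ
      rw [hnormsum τ hτ]
      apply ENNReal.ofReal_le_one.mpr
      exact Real.exp_le_one_iff.mpr (by nlinarith [hτ.1, hβ.le])
    refine ne_top_of_le_ne_top ?_ hb
    rw [MeasureTheory.setLIntegral_one, Real.volume_Ioc]
    exact ENNReal.ofReal_ne_top
  have hswap := MeasureTheory.integral_tsum hg hfin
  have hEval : (∫ τ in Set.Ioc (0:ℝ) t, ∑' n : ℕ, Real.exp (-β * τ) * pt 0 n τ)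
      = ∫ τ in Set.Ioc (0:ℝ) t, Real.exp (-β * τ) := by
    apply MeasureTheory.setIntegral_congr_fun measurableSet_Ioc
    intro τ hτ
    dsimp only
    rw [_root_.tsum_mul_left, hptsum 0 τ hτ.1.le, mul_one]
  have hEexp : (∫ τ in (0:ℝ)..t, Real.exp (-β * τ)) = β⁻¹ * (1 - Real.exp (-β * t)) := by
    rw [intervalIntegral.integral_eq_sub_of_hasDerivAt
        (f := fun τ => -β⁻¹ * Real.exp (-β * τ)) (fun x _ => ?_)
        ((by continuity : Continuous fun τ : ℝ => Real.exp (-β * τ)).intervalIntegrable 0 t)]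
    · simp only [mul_zero, neg_zero, Real.exp_zero, mul_one]
      field_simp
      ring
    · have := (expDeriv β x).const_mul (-β⁻¹)
      exact this.congr_deriv (by field_simp)
  have hIocE : (∫ τ in Set.Ioc (0:ℝ) t, Real.exp (-β * τ)) = β⁻¹ * (1 - Real.exp (-β * t)) := by
    rw [← intervalIntegral.integral_of_le ht, hEexp]
  -- summability of the integrals
  have hLn : ∀ n : ℕ, (∫ τ in Set.Ioc (0:ℝ) t, Real.exp (-β * τ) * pt 0 n τ)
      = (∫⁻ τ in Set.Ioc (0:ℝ) t, ‖Real.exp (-β * τ) * pt 0 n τ‖₊).toReal := by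
    intro n
    rw [MeasureTheory.integral_eq_lintegral_of_nonneg_ae ?_ (hg n)]
    · congr 1
      apply lintegral_congr_ae
      filter_upwards [ae_restrict_mem measurableSet_Ioc] with τ hτ
      rw [← enorm_eq_nnnorm, Real.enorm_eq_ofReal (mul_nonneg (Real.exp_nonneg _) (hptnn 0 n τ hτ.1.le))]
    · filter_upwards [ae_restrict_mem measurableSet_Ioc] with τ hτ
      exact mul_nonneg (Real.exp_nonneg _) (hptnn 0 n τ hτ.1.le)
  have hsumI : Summable (fun n : ℕ => ∫ τ in Set.Ioc (0:ℝ) t, Real.exp (-β * τ) * pt 0 n τ) :=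
    (ENNReal.summable_toReal hfin).congr fun n => (hLn n).symm
  -- assembly
  have h1 : Summable (fun n : ℕ => Real.exp (-β * t) * pt j n t) :=
    (hsummpt j t ht).mul_left _
  have h2' : Summable (fun n : ℕ => ∫ τ in (0:ℝ)..t, Real.exp (-β * τ) * pt 0 n τ) :=
    hsumI.congr fun n => (intervalIntegral.integral_of_le ht).symm
  have h2 : Summable (fun n : ℕ => β * ∫ τ in (0:ℝ)..t, Real.exp (-β * τ) * pt 0 n τ) :=
    h2'.mul_left _
  have : (∑' n : ℕ, pCat β pt j n t)
      = (∑' n : ℕ, Real.exp (-β * t) * pt j n t)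
        + ∑' n : ℕ, β * ∫ τ in (0:ℝ)..t, Real.exp (-β * τ) * pt 0 n τ := by
    rw [← Summable.tsum_add h1 h2]
    rfl
  rw [this, _root_.tsum_mul_left, _root_.tsum_mul_left, hptsum j t ht]
  have : (∑' n : ℕ, ∫ τ in (0:ℝ)..t, Real.exp (-β * τ) * pt 0 n τ)
      = β⁻¹ * (1 - Real.exp (-β * t)) := by
    rw [tsum_congr (fun n : ℕ => intervalIntegral.integral_of_le (f := fun τ =>
        Real.exp (-β * τ) * pt 0 n τ) (μ := volume) ht), ← hswap, hEval, hIocE]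
  rw [this, mul_one]
  field_simp
  ring

theorem stmt18 (c : ℕ) (hc : 1 ≤ c) (b : ℕ → ℝ)
    (hbnn : ∀ j : ℕ, j ≠ 1 → 0 ≤ b j) (hb0 : 0 < b 0)
    (hbsum : Summable b) (hbzero : (∑' j : ℕ, b j) = 0)
    (hb2 : 0 < ∑' j : ℕ, b (j + 2))
    (hh : ℕ → ℝ) (hhnn : ∀ j : ℕ, 0 ≤ hh (j + 1))
    (hhsum : Summable (fun j : ℕ => hh (j + 1)))
    (hhpos : 0 < ∑' j : ℕ, hh (j + 1))
    (β : ℝ) (hβ : 0 < β)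
    (pt : ℕ → ℕ → ℝ → ℝ)
    (hptnn : ∀ j n : ℕ, ∀ t : ℝ, 0 ≤ t → 0 ≤ pt j n t)
    (hptcont : ∀ j n : ℕ, ContinuousOn (pt j n) (Set.Ici 0))
    (hpt0 : ∀ j n : ℕ, pt j n 0 = if j = n then (1 : ℝ) else 0)
    (hptsum : ∀ j : ℕ, ∀ t : ℝ, 0 ≤ t → (∑' n : ℕ, pt j n t) = 1)
    (hpt'0 : ∀ j : ℕ, ∀ t : ℝ, 0 ≤ t →
      HasDerivWithinAt (pt j 0)
        (-(∑' j' : ℕ, hh (j' + 1)) * pt j 0 t + b 0 * pt j 1 t) (Set.Ici 0) t)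
    (hpt'mid : ∀ j n : ℕ, ∀ t : ℝ, 1 ≤ n → n ≤ c - 1 → 0 ≤ t →
      HasDerivWithinAt (pt j n)
        (hh n * pt j 0 t + (∑ k ∈ Finset.Icc 1 (n - 1), b (n - k + 1) * pt j k t) +
          (b 1 - ((n : ℝ) - 1) * b 0) * pt j n t +
          ((n : ℝ) + 1) * b 0 * pt j (n + 1) t) (Set.Ici 0) t)
    (hpt'tail : ∀ j n : ℕ, ∀ t : ℝ, c ≤ n → 0 ≤ t →
      HasDerivWithinAt (pt j n)
        (hh n * pt j 0 t + (∑ k ∈ Finset.Icc 1 (n - 1), b (n - k + 1) * pt j k t) +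
          (b 1 - ((c : ℝ) - 1) * b 0) * pt j n t +
          (c : ℝ) * b 0 * pt j (n + 1) t) (Set.Ici 0) t) :
    (∀ j n : ℕ, pCat β pt j n 0 = if j = n then (1 : ℝ) else 0) ∧
    (∀ j : ℕ, ∀ t : ℝ, 0 ≤ t → (∑' n : ℕ, pCat β pt j n t) = 1) ∧
    (∀ j : ℕ, ∀ t : ℝ, 0 ≤ t →
      HasDerivWithinAt (pCat β pt j 0)
        (-((∑' j' : ℕ, hh (j' + 1)) + β) * pCat β pt j 0 t +
          b 0 * pCat β pt j 1 t + β) (Set.Ici 0) t) ∧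
    (∀ j n : ℕ, ∀ t : ℝ, 1 ≤ n → n ≤ c - 1 → 0 ≤ t →
      HasDerivWithinAt (pCat β pt j n)
        (hh n * pCat β pt j 0 t +
          (∑ k ∈ Finset.Icc 1 (n - 1), b (n - k + 1) * pCat β pt j k t) +
          (b 1 - ((n : ℝ) - 1) * b 0 - β) * pCat β pt j n t +
          ((n : ℝ) + 1) * b 0 * pCat β pt j (n + 1) t) (Set.Ici 0) t) ∧
    (∀ j n : ℕ, ∀ t : ℝ, c ≤ n → 0 ≤ t →
      HasDerivWithinAt (pCat β pt j n)
        (hh n * pCat β pt j 0 t +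
          (∑ k ∈ Finset.Icc 1 (n - 1), b (n - k + 1) * pCat β pt j k t) +
          (b 1 - ((c : ℝ) - 1) * b 0 - β) * pCat β pt j n t +
          (c : ℝ) * b 0 * pCat β pt j (n + 1) t) (Set.Ici 0) t) := by
  refine ⟨?_, tsumOne hβ hptnn hptcont hptsum, ?_, ?_, ?_⟩
  · -- initial condition
    intro j n
    simp [pCat, intervalIntegral.integral_same, hpt0 j n]
  · -- row 0
    intro j t ht
    set a : ℕ → ℝ := fun k => if k = 0 then -(∑' j' : ℕ, hh (j' + 1)) else b 0 with ha
    have hrow : ∀ j' : ℕ, ∀ t' : ℝ, 0 ≤ t' →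
        HasDerivWithinAt (pt j' 0) (∑ k ∈ ({0, 1} : Finset ℕ), a k * pt j' k t')
          (Set.Ici 0) t' := by
      intro j' t' ht'
      rw [Finset.sum_pair (show (0:ℕ) ≠ 1 by norm_num)]
      simp only [ha]
      norm_num
      convert hpt'0 j' t' ht' using 1
      ring
    have key := keyDeriv β pt hptcont hpt0 {0, 1} a 0 hrow j t ht
    rw [Finset.sum_pair (show (0:ℕ) ≠ 1 by norm_num)] at key
    simp only [ha] at key
    norm_num at key
    convert key using 1
    ring
  · -- middle rows
    intro j n t hn hnc ht
    have hrow : ∀ j' : ℕ, ∀ t' : ℝ, 0 ≤ t' →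
        HasDerivWithinAt (pt j' n)
          (∑ k ∈ rowF n, rowA b (hh n) (b 1 - ((n : ℝ) - 1) * b 0) (((n : ℝ) + 1) * b 0) n k *
            pt j' k t') (Set.Ici 0) t' := by
      intro j' t' ht'
      rw [rowSum b _ _ _ n hn]
      exact hpt'mid j' n t' hn hnc ht'
    have key := keyDeriv β pt hptcont hpt0 (rowF n)
      (rowA b (hh n) (b 1 - ((n : ℝ) - 1) * b 0) (((n : ℝ) + 1) * b 0) n) n hrow j t ht
    rw [rowSum b _ _ _ n hn, if_neg (show ¬ n = 0 by omega)] at key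
    convert key using 1
    ring
  · -- tail rows
    intro j n t hcn ht
    have hn : 1 ≤ n := le_trans hc hcn
    have hrow : ∀ j' : ℕ, ∀ t' : ℝ, 0 ≤ t' →
        HasDerivWithinAt (pt j' n)
          (∑ k ∈ rowF n, rowA b (hh n) (b 1 - ((c : ℝ) - 1) * b 0) ((c : ℝ) * b 0) n k *
            pt j' k t') (Set.Ici 0) t' := by
      intro j' t' ht'
      rw [rowSum b _ _ _ n hn]
      exact hpt'tail j' n t' hcn ht'
    have key := keyDeriv β pt hptcont hpt0 (rowF n)
      (rowA b (hh n) (b 1 - ((c : ℝ) - 1) * b 0) ((c : ℝ) * b 0) n) n hrow j t ht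
    rw [rowSum b _ _ _ n hn, if_neg (show ¬ n = 0 by omega)] at key
    convert key using 1
    ring
end
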